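/- Let $Q$ be a Dirichlet form with generator $L$, and suppose for every $u \in D(L) \cap L^1(X,m)$ with $Lu \in L^1(X,m)$ one has $\int_X Lu\, dm = 0$. Assume there exists a sequence $(e_n) \subset D(Q)$ with $0 \leq e_n \leq 1$ and $e_n \to 1$ m-a.e., and a strictly positive $f \in L^1 \cap L^2$. Then $(L+1)^{-1}1 = 1$, i.e., $Q$ is stochastically complete. -/

import Mathlib

open MeasureTheory Filter Topology

/-- Characterization of stochastic completeness: if the Green formula
`∫ Lu dm = 0` holds for all `u ∈ D(L) ∩ L¹` with `Lu ∈ L¹`, then the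
(extended) resolvent `G = (L+1)⁻¹` satisfies `G 1 = 1`. -/
theorem stmt_13 {X : Type*} [MeasurableSpace X] (μ : Measure X) [SigmaFinite μ]
    (DL : Set (X → ℝ)) (Lop : (X → ℝ) → (X → ℝ))
    (DQ : Set (X → ℝ)) (G : (X → ℝ) → (X → ℝ))
    -- the resolvent property on `L¹ ∩ L²`
    (hres : ∀ g : X → ℝ, Integrable g μ → MemLp g 2 μ →
      G g ∈ DL ∧ Integrable (G g) μ ∧ MemLp (G g) 2 μ ∧ Lop (G g) =ᵐ[μ] g - G g)
    -- symmetry of the resolvent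
    (hsym : ∀ u v : X → ℝ, MemLp u 2 μ → MemLp v 2 μ →
      ∫ x, u x * G v x ∂μ = ∫ x, G u x * v x ∂μ)
    -- Markov property and monotonicity of the extended resolvent
    (hmarkov : ∀ u : X → ℝ, (∀ᵐ x ∂μ, 0 ≤ u x ∧ u x ≤ 1) →
      ∀ᵐ x ∂μ, 0 ≤ G u x ∧ G u x ≤ 1)
    (hmono : ∀ u v : X → ℝ, (∀ᵐ x ∂μ, u x ≤ v x) → ∀ᵐ x ∂μ, G u x ≤ G v x)
    -- continuity of the extended resolvent along monotone a.e. limits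
    (hcont : ∀ (u : ℕ → X → ℝ) (v : X → ℝ),
      (∀ᵐ x ∂μ, Monotone fun n => u n x) →
      (∀ᵐ x ∂μ, Tendsto (fun n => u n x) atTop (𝓝 (v x))) →
      ∀ᵐ x ∂μ, Tendsto (fun n => G (u n) x) atTop (𝓝 (G v x)))
    -- the Green formula hypothesis
    (hGreen : ∀ u ∈ DL, Integrable u μ → Integrable (Lop u) μ → ∫ x, Lop u x ∂μ = 0)
    -- a sequence `(eₙ) ⊆ D(Q)` with `0 ≤ eₙ ≤ 1` and `eₙ → 1` a.e.
    (e : ℕ → X → ℝ) (he : ∀ n, e n ∈ DQ)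
    (he01 : ∀ n, ∀ᵐ x ∂μ, 0 ≤ e n x ∧ e n x ≤ 1)
    (helim : ∀ᵐ x ∂μ, Tendsto (fun n => e n x) atTop (𝓝 1))
    -- a strictly positive `f ∈ L¹ ∩ L²`
    (f : X → ℝ) (hfpos : ∀ᵐ x ∂μ, 0 < f x)
    (hf1 : Integrable f μ) (hf2 : MemLp f 2 μ) :
    G (fun _ => 1) =ᵐ[μ] fun _ => 1 := by
  classical
  set v := G f with hv
  obtain ⟨hvDL, hvInt, hvL2, hvL⟩ := hres f hf1 hf2
  have hfm : AEStronglyMeasurable f μ := hf1.aestronglyMeasurable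
  -- approximating sequence
  set w : ℕ → X → ℝ := fun n x => min 1 ((n : ℝ) * f x) with hwdef
  have hwmono : ∀ᵐ x ∂μ, Monotone fun n => w n x := by
    filter_upwards [hfpos] with x hx
    intro a b hab
    exact min_le_min le_rfl (mul_le_mul_of_nonneg_right (Nat.cast_le.2 hab) hx.le)
  have hwlim : ∀ᵐ x ∂μ, Tendsto (fun n => w n x) atTop (𝓝 ((fun _ : X => (1:ℝ)) x)) := by
    filter_upwards [hfpos] with x hx
    obtain ⟨N, hN⟩ := exists_nat_ge (1 / f x)
    refine tendsto_const_nhds.congr' ?_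
    filter_upwards [eventually_ge_atTop N] with n hn
    have h1 : (1:ℝ) ≤ (n:ℝ) * f x := (div_le_iff₀ hx).1 (hN.trans (Nat.cast_le.2 hn))
    simp only [hwdef]
    exact (min_eq_left h1).symm
  have hw01 : ∀ n, ∀ᵐ x ∂μ, 0 ≤ w n x ∧ w n x ≤ 1 := by
    intro n
    filter_upwards [hfpos] with x hx
    exact ⟨le_min zero_le_one (by positivity), min_le_left _ _⟩
  have hwm : ∀ n, AEStronglyMeasurable (w n) μ := fun n =>
    (aemeasurable_const.min ((hf1.aemeasurable).const_mul _)).aestronglyMeasurable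
  have hwbd : ∀ n, ∀ᵐ x ∂μ, ‖w n x‖ ≤ ‖(n:ℝ) * f x‖ := by
    intro n
    filter_upwards [hfpos] with x hx
    have h0 : (0:ℝ) ≤ min 1 ((n:ℝ) * f x) := le_min zero_le_one (by positivity)
    rw [Real.norm_eq_abs, Real.norm_eq_abs, abs_of_nonneg h0]
    exact (min_le_right _ _).trans (le_abs_self _)
  have hwInt : ∀ n, Integrable (w n) μ := fun n =>
    (hf1.const_mul (n:ℝ)).mono (hwm n) (hwbd n)
  have hwL2 : ∀ n, MemLp (w n) 2 μ := fun n =>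
    (hf2.const_mul (n:ℝ)).of_le (hwm n) (hwbd n)
  have hGwm : ∀ n, AEStronglyMeasurable (G (w n)) μ := fun n =>
    ((hres (w n) (hwInt n) (hwL2 n)).2.2.1).aestronglyMeasurable
  have hGlim : ∀ᵐ x ∂μ, Tendsto (fun n => G (w n) x) atTop (𝓝 (G (fun _ => 1) x)) :=
    hcont w (fun _ => 1) hwmono hwlim
  have hG1m : AEStronglyMeasurable (G (fun _ => 1)) μ :=
    aestronglyMeasurable_of_tendsto_ae atTop hGwm hGlim
  have hG101 : ∀ᵐ x ∂μ, 0 ≤ G (fun _ => 1) x ∧ G (fun _ => 1) x ≤ 1 :=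
    hmarkov _ (Eventually.of_forall fun x => ⟨zero_le_one, le_rfl⟩)
  -- Green's formula gives ∫ v = ∫ f
  have hLint : Integrable (Lop v) μ := (hf1.sub hvInt).congr hvL.symm
  have h0 : ∫ x, Lop v x ∂μ = 0 := hGreen v hvDL hvInt hLint
  have hint_eq : ∫ x, v x ∂μ = ∫ x, f x ∂μ := by
    have hc : ∫ x, Lop v x ∂μ = ∫ x, (f x - v x) ∂μ := by
      refine integral_congr_ae ?_
      filter_upwards [hvL] with x hx
      simpa using hx
    rw [hc, integral_sub hf1 hvInt] at h0
    linarith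
  -- dominated convergence 1
  have hT1 : Tendsto (fun n => ∫ x, f x * G (w n) x ∂μ) atTop
      (𝓝 (∫ x, f x * G (fun _ => 1) x ∂μ)) := by
    refine tendsto_integral_of_dominated_convergence (fun x => |f x|)
      (fun n => hfm.mul (hGwm n)) hf1.abs ?_ ?_
    · intro n
      filter_upwards [hmarkov (w n) (hw01 n)] with x hx
      rw [Real.norm_eq_abs, abs_mul, abs_of_nonneg hx.1]
      calc |f x| * G (w n) x ≤ |f x| * 1 :=
            mul_le_mul_of_nonneg_left hx.2 (abs_nonneg _)
        _ = |f x| := mul_one _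
    · filter_upwards [hGlim] with x hx
      exact hx.const_mul (f x)
  -- dominated convergence 2
  have hT2 : Tendsto (fun n => ∫ x, v x * w n x ∂μ) atTop (𝓝 (∫ x, v x ∂μ)) := by
    refine tendsto_integral_of_dominated_convergence (fun x => |v x|)
      (fun n => hvInt.aestronglyMeasurable.mul (hwm n)) hvInt.abs ?_ ?_
    · intro n
      filter_upwards [hw01 n] with x hx
      rw [Real.norm_eq_abs, abs_mul, abs_of_nonneg hx.1]
      calc |v x| * w n x ≤ |v x| * 1 := mul_le_mul_of_nonneg_left hx.2 (abs_nonneg _)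
        _ = |v x| := mul_one _
    · filter_upwards [hwlim] with x hx
      simpa using hx.const_mul (v x)
  -- symmetry identifies the two sequences
  have hT1' : Tendsto (fun n => ∫ x, v x * w n x ∂μ) atTop
      (𝓝 (∫ x, f x * G (fun _ => 1) x ∂μ)) := by
    refine hT1.congr fun n => ?_
    exact hsym f (w n) hf2 (hwL2 n)
  have key : ∫ x, f x * G (fun _ => 1) x ∂μ = ∫ x, f x ∂μ :=
    (tendsto_nhds_unique hT1' hT2).trans hint_eq
  -- conclude
  have hIntfG : Integrable (fun x => f x * G (fun _ => 1) x) μ := by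
    refine hf1.abs.mono (hfm.mul hG1m) ?_
    filter_upwards [hG101] with x hx
    rw [Real.norm_eq_abs, Real.norm_eq_abs, abs_mul, abs_abs, abs_of_nonneg hx.1]
    calc |f x| * G (fun _ => 1) x ≤ |f x| * 1 :=
          mul_le_mul_of_nonneg_left hx.2 (abs_nonneg _)
      _ = |f x| := mul_one _
  have hgInt : Integrable (fun x => f x - f x * G (fun _ => 1) x) μ := hf1.sub hIntfG
  have hgnn : 0 ≤ᵐ[μ] fun x => f x - f x * G (fun _ => 1) x := by
    filter_upwards [hfpos, hG101] with x hx hG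
    simp only [Pi.zero_apply]
    nlinarith [hG.2]
  have hg0 : ∫ x, (f x - f x * G (fun _ => 1) x) ∂μ = 0 := by
    rw [integral_sub hf1 hIntfG, key, sub_self]
  have hzero : (fun x => f x - f x * G (fun _ => 1) x) =ᵐ[μ] 0 :=
    (integral_eq_zero_iff_of_nonneg_ae hgnn hgInt).1 hg0
  filter_upwards [hzero, hfpos] with x hx hfx
  have : f x * 1 = f x * G (fun _ => 1) x := by
    simp only [Pi.zero_apply] at hx
    linarith
  exact (mul_left_cancel₀ (ne_of_gt hfx) this).symm
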